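/- Let û : ℝ≥0 → ℂ⁶ solve the Fourier-transformed 6×6 Timoshenko–Cattaneo system as above. Define E₁ = −Re( a₅²(û₁·conj(û₄) + a₄·û₂·conj(û₃)) − a₅(a₄² − 1)·û₂·conj(û₅) ). Then ∂ₜE₁ + a₅²(|û₁|² − |û₄|²) + a₅(a₄² + a₅² − 1)·ξ·Re(i·û₁·conj(û₅)) − a₅·a₆·(a₄² − 1)·ξ·Re(i·û₂·conj(û₆)) = 0 for all t ≥ 0. -/

import Mathlib

open Complex

/-- Dissipation identity (2.8) for the Fourier-transformed 6×6 Timoshenko–Cattaneo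
system, for the functional E₁. -/
theorem stmt2 (γ ξ a₄ a₅ a₆ : ℝ) (hγ : 0 < γ)
    (ha₄ : a₄ ≠ 0) (ha₅ : a₅ ≠ 0) (ha₆ : a₆ ≠ 0)
    (u : ℝ → Fin 6 → ℂ)
    (hdiff : ∀ j : Fin 6, ∀ t : ℝ, 0 ≤ t → DifferentiableAt ℝ (fun s => u s j) t)
    (h1 : ∀ t : ℝ, 0 ≤ t →
      deriv (fun s => u s 0) t + I * (ξ : ℂ) * u t 1 + u t 3 = 0)
    (h2 : ∀ t : ℝ, 0 ≤ t →
      deriv (fun s => u s 1) t + I * (ξ : ℂ) * u t 0 = 0)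
    (h3 : ∀ t : ℝ, 0 ≤ t →
      deriv (fun s => u s 2) t + I * (ξ : ℂ) * (a₄ : ℂ) * u t 3 = 0)
    (h4 : ∀ t : ℝ, 0 ≤ t →
      deriv (fun s => u s 3) t + I * (ξ : ℂ) * ((a₄ : ℂ) * u t 2 + (a₅ : ℂ) * u t 4)
        - u t 0 = 0)
    (h5 : ∀ t : ℝ, 0 ≤ t →
      deriv (fun s => u s 4) t + I * (ξ : ℂ) * ((a₅ : ℂ) * u t 3 + (a₆ : ℂ) * u t 5) = 0)
    (h6 : ∀ t : ℝ, 0 ≤ t →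
      deriv (fun s => u s 5) t + I * (ξ : ℂ) * (a₆ : ℂ) * u t 4 + (γ : ℂ) * u t 5 = 0) :
    ∀ t : ℝ, 0 ≤ t →
      deriv (fun s => -(((a₅^2 : ℝ) : ℂ) * (u s 0 * (starRingEnd ℂ) (u s 3)
            + (a₄ : ℂ) * u s 1 * (starRingEnd ℂ) (u s 2))
          - ((a₅ * (a₄^2 - 1) : ℝ) : ℂ) * u s 1 * (starRingEnd ℂ) (u s 4)).re) t
      + a₅^2 * (Complex.normSq (u t 0) - Complex.normSq (u t 3))
      + a₅ * (a₄^2 + a₅^2 - 1) * ξ * (I * u t 0 * (starRingEnd ℂ) (u t 4)).re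
      - a₅ * a₆ * (a₄^2 - 1) * ξ * (I * u t 1 * (starRingEnd ℂ) (u t 5)).re = 0 := by
  intro t ht
  have hd : ∀ j : Fin 6, HasDerivAt (fun s => u s j) (deriv (fun s => u s j) t) t :=
    fun j => (hdiff j t ht).hasDerivAt
  have e0 : deriv (fun s => u s 0) t = -(I * ξ * u t 1 + u t 3) := by
    linear_combination h1 t ht
  have e1 : deriv (fun s => u s 1) t = -(I * ξ * u t 0) := by
    linear_combination h2 t ht
  have e2 : deriv (fun s => u s 2) t = -(I * ξ * a₄ * u t 3) := by
    linear_combination h3 t ht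
  have e3 : deriv (fun s => u s 3) t = u t 0 - I * ξ * ((a₄:ℂ) * u t 2 + (a₅:ℂ) * u t 4) := by
    linear_combination h4 t ht
  have e4 : deriv (fun s => u s 4) t = -(I * ξ * ((a₅:ℂ) * u t 3 + (a₆:ℂ) * u t 5)) := by
    linear_combination h5 t ht
  have hF := ((((hd 0).mul (hd 3).star).add
      (((hd 1).const_mul ((a₄:ℝ):ℂ)).mul (hd 2).star)).const_mul (((a₅^2 : ℝ) : ℂ))).sub
      ((((hd 1).const_mul (((a₅ * (a₄^2 - 1) : ℝ) : ℂ))).mul (hd 4).star))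
  have hRe := (Complex.reCLM.hasFDerivAt.comp_hasDerivAt t hF).neg
  simp only [Complex.reCLM_apply, Function.comp_def, Pi.mul_apply, Pi.add_apply, Pi.sub_apply,
    Pi.neg_apply, Pi.neg_def] at hRe
  simp only [starRingEnd_apply]
  rw [hRe.deriv]
  rw [e0, e1, e2, e3, e4]
  simp only [Complex.star_def, map_add, map_mul, map_sub, map_neg, Complex.conj_ofReal,
    Complex.conj_I, Complex.normSq_apply, Complex.add_re, Complex.sub_re, Complex.neg_re,
    Complex.mul_re, Complex.mul_im, Complex.add_im, Complex.sub_im, Complex.neg_im,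
    Complex.conj_re, Complex.conj_im, Complex.I_re, Complex.I_im, Complex.ofReal_re,
    Complex.ofReal_im]
  ring
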